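/- (BSC-bound for H_α^A.) Fix α > 0, α ≠ 1, and suppose that for every fixed y ∈ I_α^A the map x ↦ κ_α^A(x,y) is convex on I_α^A, and likewise in the second argument for every fixed first argument. Then: if α > 1, H_α^A(X_1+X_2|Y_1Y_2) ≤ h_α( h_α^{-1}(H_α^A(X_1|Y_1)) ∗ h_α^{-1}(H_α^A(X_2|Y_2)) ); and if α < 1, H_α^A(X_1+X_2|Y_1Y_2) ≥ h_α( h_α^{-1}(H_α^A(X_1|Y_1)) ∗ h_α^{-1}(H_α^A(X_2|Y_2)) ). If instead κ_α^A is concave in each argument, the two inequalities hold with ≤ and ≥ exchanged. -/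

import Mathlib

open Real

noncomputable section

/-- Binary convolution `a∗b = a(1-b) + (1-a)b`. -/
def bconv (a b : ℝ) : ℝ := a * (1 - b) + (1 - a) * b

/-- Binary Rényi entropy `h_α(p) = (1/(1-α))·log(p^α + (1-p)^α)`. -/
def binH (α p : ℝ) : ℝ := (1 / (1 - α)) * Real.log (p ^ α + (1 - p) ^ α)

/-- Inverse of `h_α` as a map `[0, log 2] → [0, 1/2]`. -/
def binHInv (α : ℝ) : ℝ → ℝ := Function.invFunOn (binH α) (Set.Icc 0 (1/2))

/-- `k_α^A(p) = (p^α + (1-p)^α)^{1/α}`. -/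
def kA (α p : ℝ) : ℝ := (p ^ α + (1 - p) ^ α) ^ (1/α)

/-- Inverse of `k_α^A`, mapping `I_α^A` back to `[0,1/2]`. -/
def kAInv (α : ℝ) : ℝ → ℝ := Function.invFunOn (kA α) (Set.Icc 0 (1/2))

/-- `δ_α^A = 2^{(1-α)/α}`. -/
def deltaA (α : ℝ) : ℝ := (2 : ℝ) ^ ((1 - α)/α)

/-- The closed interval `I_α^A` with endpoints `1` and `δ_α^A`. -/
def IA (α : ℝ) : Set ℝ := Set.uIcc 1 (deltaA α)

/-- `κ_α^A(x,y) = k_α^A((k_α^A)⁻¹(x) ∗ (k_α^A)⁻¹(y))`. -/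
def kkA (α x y : ℝ) : ℝ := kA α (bconv (kAInv α x) (kAInv α y))

/-- `k_α^H(p) = p^α + (1-p)^α`. -/
def kH (α p : ℝ) : ℝ := p ^ α + (1 - p) ^ α

/-- Inverse of `k_α^H`, mapping `I_α^H` back to `[0,1/2]`. -/
def kHInv (α : ℝ) : ℝ → ℝ := Function.invFunOn (kH α) (Set.Icc 0 (1/2))

/-- `δ_α^H = 2^{1-α}`. -/
def deltaH (α : ℝ) : ℝ := (2 : ℝ) ^ (1 - α)

/-- The closed interval `I_α^H` with endpoints `1` and `δ_α^H`. -/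
def IH (α : ℝ) : Set ℝ := Set.uIcc 1 (deltaH α)

/-- `κ_α^H(x,y) = k_α^H((k_α^H)⁻¹(x) ∗ (k_α^H)⁻¹(y))`. -/
def kkH (α x y : ℝ) : ℝ := kH α (bconv (kHInv α x) (kHInv α y))

/-- `ĥ_α(x,y) = h_α(h_α⁻¹(x) ∗ h_α⁻¹(y))`. -/
def hhat (α x y : ℝ) : ℝ := binH α (bconv (binHInv α x) (binHInv α y))

/-- Marginal on `Y` of a joint pmf. -/
def margY {X Y : Type*} [Fintype X] (p : X → Y → ℝ) (y : Y) : ℝ := ∑ x, p x y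

/-- A joint pmf: nonnegative entries summing to one. -/
def IsPmf {X Y : Type*} [Fintype X] [Fintype Y] (p : X → Y → ℝ) : Prop :=
  (∀ x y, 0 ≤ p x y) ∧ ∑ x, ∑ y, p x y = 1

/-- Arimoto conditional Rényi entropy `H_α^A(X|Y)`. -/
def condA (α : ℝ) {X Y : Type*} [Fintype X] [Fintype Y] (p : X → Y → ℝ) : ℝ :=
  (α / (1 - α)) * Real.log (∑ y, margY p y * (∑ x, (p x y / margY p y) ^ α) ^ (1/α))

/-- Hayashi conditional Rényi entropy `H_α^H(X|Y)`. -/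
def condH (α : ℝ) {X Y : Type*} [Fintype X] [Fintype Y] (p : X → Y → ℝ) : ℝ :=
  (1 / (1 - α)) * Real.log (∑ y, ∑ x, margY p y * (p x y / margY p y) ^ α)

/-- Jizba–Arimitsu conditional Rényi entropy `H_α^J(X|Y)`. -/
def condJ (α : ℝ) {X Y : Type*} [Fintype X] [Fintype Y] (p : X → Y → ℝ) : ℝ :=
  (1 / (1 - α)) * (Real.log (∑ x, ∑ y, p x y ^ α) - Real.log (∑ y, margY p y ^ α))

/-- Cachin conditional Rényi entropy `H_α^C(X|Y)`. -/
def condC (α : ℝ) {X Y : Type*} [Fintype X] [Fintype Y] (p : X → Y → ℝ) : ℝ :=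
  (1 / (1 - α)) * ∑ y, margY p y * Real.log (∑ x, (p x y / margY p y) ^ α)

/-- `K_α^A(X|Y) = exp(((1-α)/α)·H_α^A(X|Y))`. -/
def KA (α : ℝ) {X Y : Type*} [Fintype X] [Fintype Y] (p : X → Y → ℝ) : ℝ :=
  Real.exp (((1 - α)/α) * condA α p)

/-- `K_α^H(X|Y) = exp((1-α)·H_α^H(X|Y))`. -/
def KH (α : ℝ) {X Y : Type*} [Fintype X] [Fintype Y] (p : X → Y → ℝ) : ℝ :=
  Real.exp ((1 - α) * condH α p)

/-- `K_α^J(X|Y) = exp((1-α)·H_α^J(X|Y))`. -/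
def KJ (α : ℝ) {X Y : Type*} [Fintype X] [Fintype Y] (p : X → Y → ℝ) : ℝ :=
  Real.exp ((1 - α) * condJ α p)

/-- Joint pmf of `(X₁+X₂, (Y₁,Y₂))` for independent pairs `(X₁,Y₁)`, `(X₂,Y₂)`. -/
def combine {Y1 Y2 : Type*} (p1 : Bool → Y1 → ℝ) (p2 : Bool → Y2 → ℝ) :
    Bool → Y1 × Y2 → ℝ :=
  fun z y => ∑ x : Bool, p1 x y.1 * p2 (Bool.xor x z) y.2

/-- `k_∞^A(p) = max{p, 1-p}`. -/
def kInf (p : ℝ) : ℝ := max p (1 - p)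

/-- Binary min-entropy `h_∞(p) = -log max{p, 1-p}`. -/
def binHInf (p : ℝ) : ℝ := - Real.log (max p (1 - p))

/-- Inverse of the restriction of `h_∞` to `[0,1/2]`. -/
def binHInfInv : ℝ → ℝ := Function.invFunOn binHInf (Set.Icc 0 (1/2))

/-- Conditional min-entropy `H_∞(X|Y)` for binary `X`. -/
def condInf {Y : Type*} [Fintype Y] (p : Bool → Y → ℝ) : ℝ :=
  - Real.log (∑ y, margY p y * max (p false y / margY p y) (p true y / margY p y))

/-- Unconditional Rényi entropy of a finitely supported distribution. -/
def renyiEnt (α : ℝ) {X : Type*} [Fintype X] (p : X → ℝ) : ℝ :=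
  (1 / (1 - α)) * Real.log (∑ x, p x ^ α)

/-- Distribution of the mod-2 sum of two independent binary random variables. -/
def sumDist (p1 p2 : Bool → ℝ) : Bool → ℝ := fun z => ∑ x : Bool, p1 x * p2 (Bool.xor x z)


section Aux

variable {α : ℝ}

lemma kH_pos (hα : 0 < α) {t : ℝ} (ht : t ∈ Set.Icc (0:ℝ) 1) : 0 < kH α t := by
  rcases eq_or_lt_of_le ht.1 with h | h
  · simp [kH, ← h, Real.zero_rpow (ne_of_gt hα)]
  · exact add_pos_of_pos_of_nonneg (Real.rpow_pos_of_pos h α)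
      (Real.rpow_nonneg (by linarith [ht.2]) α)

lemma kA_pos (hα : 0 < α) {t : ℝ} (ht : t ∈ Set.Icc (0:ℝ) 1) : 0 < kA α t :=
  Real.rpow_pos_of_pos (kH_pos hα ht) _

lemma kH_symm (t : ℝ) : kH α (1 - t) = kH α t := by
  unfold kH; rw [show (1:ℝ) - (1 - t) = t by ring, add_comm]

lemma kA_symm (t : ℝ) : kA α (1 - t) = kA α t := by
  unfold kA; rw [show (1:ℝ) - (1 - t) = t by ring, add_comm]

lemma continuous_kH (hα : 0 < α) : Continuous (kH α) :=
  (Real.continuous_rpow_const hα.le).add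
    ((Real.continuous_rpow_const hα.le).comp (continuous_const.sub continuous_id))

lemma continuous_kA (hα : 0 < α) : Continuous (kA α) :=
  (Real.continuous_rpow_const (by positivity)).comp (continuous_kH hα)

lemma kH_hasDerivAt (hα : 0 < α) {t : ℝ} (h0 : t ≠ 0) (h1 : t ≠ 1) :
    HasDerivAt (kH α) (α * t ^ (α - 1) - α * (1 - t) ^ (α - 1)) t := by
  have h1' : HasDerivAt (fun t : ℝ => t ^ α) (α * t ^ (α - 1)) t :=
    Real.hasDerivAt_rpow_const (Or.inl h0)
  have h2 : HasDerivAt (fun t : ℝ => (1 - t) ^ α) (α * (1 - t) ^ (α - 1) * (-1)) t := by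
    have hinner : HasDerivAt (fun t : ℝ => 1 - t) (-1) t := (hasDerivAt_id t).const_sub 1
    exact (Real.hasDerivAt_rpow_const (x := 1 - t) (p := α)
      (Or.inl (by intro h; apply h1; linarith))).comp t hinner
  have := h1'.add h2
  exact this.congr_deriv (by ring)

lemma kH_strictMonoOn (hα : 0 < α) (hlt : α < 1) :
    StrictMonoOn (kH α) (Set.Icc 0 (1/2)) := by
  apply strictMonoOn_of_deriv_pos (convex_Icc _ _) (continuous_kH hα).continuousOn
  intro t ht
  rw [interior_Icc] at ht
  have hd := kH_hasDerivAt hα (ne_of_gt ht.1) (by intro h; rw [h] at ht; norm_num at ht)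
  rw [hd.deriv]
  have : (1 - t) ^ (α - 1) < t ^ (α - 1) :=
    Real.rpow_lt_rpow_of_neg ht.1 (by linarith [ht.2]) (by linarith)
  nlinarith

lemma kH_strictAntiOn (hα : 0 < α) (hgt : 1 < α) :
    StrictAntiOn (kH α) (Set.Icc 0 (1/2)) := by
  apply strictAntiOn_of_deriv_neg (convex_Icc _ _) (continuous_kH hα).continuousOn
  intro t ht
  rw [interior_Icc] at ht
  have hd := kH_hasDerivAt hα (ne_of_gt ht.1) (by intro h; rw [h] at ht; norm_num at ht)
  rw [hd.deriv]
  have : t ^ (α - 1) < (1 - t) ^ (α - 1) :=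
    Real.rpow_lt_rpow ht.1.le (by linarith [ht.2]) (by linarith)
  nlinarith

lemma Icc_half_subset : Set.Icc (0:ℝ) (1/2) ⊆ Set.Icc (0:ℝ) 1 :=
  Set.Icc_subset_Icc le_rfl (by norm_num)

lemma kA_strictMonoOn (hα : 0 < α) (hlt : α < 1) :
    StrictMonoOn (kA α) (Set.Icc 0 (1/2)) := by
  intro s hs t ht hst
  exact Real.rpow_lt_rpow (kH_pos hα (Icc_half_subset hs)).le
    (kH_strictMonoOn hα hlt hs ht hst) (by positivity)

lemma kA_strictAntiOn (hα : 0 < α) (hgt : 1 < α) :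
    StrictAntiOn (kA α) (Set.Icc 0 (1/2)) := by
  intro s hs t ht hst
  exact Real.rpow_lt_rpow (kH_pos hα (Icc_half_subset ht)).le
    (kH_strictAntiOn hα hgt hs ht hst) (by positivity)

lemma kA_injOn (hα : 0 < α) (hα1 : α ≠ 1) : Set.InjOn (kA α) (Set.Icc 0 (1/2)) := by
  rcases lt_or_gt_of_ne hα1 with h | h
  · exact (kA_strictMonoOn hα h).injOn
  · exact (kA_strictAntiOn hα h).injOn

lemma kH_injOn (hα : 0 < α) (hα1 : α ≠ 1) : Set.InjOn (kH α) (Set.Icc 0 (1/2)) := by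
  rcases lt_or_gt_of_ne hα1 with h | h
  · exact (kH_strictMonoOn hα h).injOn
  · exact (kH_strictAntiOn hα h).injOn

lemma kA_zero (hα : 0 < α) : kA α 0 = 1 := by
  simp [kA, Real.zero_rpow (ne_of_gt hα)]

lemma kA_half (hα : 0 < α) : kA α (1/2) = deltaA α := by
  have h2 : (0:ℝ) ≤ 2 := by norm_num
  have h1 : ((1:ℝ)/2) ^ α = (2:ℝ) ^ (-α) := by
    rw [one_div, Real.inv_rpow h2, ← Real.rpow_neg h2]
  unfold kA deltaA
  rw [show (1:ℝ) - 1/2 = 1/2 by norm_num, show ((1:ℝ)/2) ^ α + (1/2) ^ α = 2 * (1/2)^α by ring,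
    h1, show (2:ℝ) * 2 ^ (-α) = 2 ^ (1:ℝ) * 2 ^ (-α) by rw [Real.rpow_one],
    ← Real.rpow_add (by norm_num : (0:ℝ) < 2)]
  rw [← Real.rpow_mul h2, show ((1:ℝ) + -α) * (1/α) = (1-α)/α by ring]

lemma kA_mem_IA (hα : 0 < α) (hα1 : α ≠ 1) {t : ℝ} (ht : t ∈ Set.Icc (0:ℝ) (1/2)) :
    kA α t ∈ IA α := by
  have h0 : (0:ℝ) ∈ Set.Icc (0:ℝ) (1/2) := by norm_num
  have hh : (1/2:ℝ) ∈ Set.Icc (0:ℝ) (1/2) := by norm_num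
  rw [IA, Set.mem_uIcc]
  rcases lt_or_gt_of_ne hα1 with h | h
  · left
    constructor
    · rw [← kA_zero hα]; exact (kA_strictMonoOn hα h).monotoneOn h0 ht ht.1
    · rw [← kA_half hα]; exact (kA_strictMonoOn hα h).monotoneOn ht hh ht.2
  · right
    constructor
    · rw [← kA_half hα]; exact (kA_strictAntiOn hα h).antitoneOn ht hh ht.2
    · rw [← kA_zero hα]; exact (kA_strictAntiOn hα h).antitoneOn h0 ht ht.1

lemma kA_mem_IA' (hα : 0 < α) (hα1 : α ≠ 1) {t : ℝ} (ht : t ∈ Set.Icc (0:ℝ) 1) :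
    kA α t ∈ IA α := by
  rcases le_or_gt t (1/2) with h | h
  · exact kA_mem_IA hα hα1 ⟨ht.1, h⟩
  · rw [← kA_symm]
    exact kA_mem_IA hα hα1 ⟨by linarith [ht.2], by linarith⟩

lemma IA_pos (hα : 0 < α) (hα1 : α ≠ 1) {x : ℝ} (hx : x ∈ IA α) : 0 < x := by
  have hδ : (0:ℝ) < deltaA α := Real.rpow_pos_of_pos (by norm_num) _
  rw [IA, Set.mem_uIcc] at hx
  rcases hx with ⟨h1, _⟩ | ⟨h1, _⟩ <;> linarith

lemma IA_surj (hα : 0 < α) (hα1 : α ≠ 1) {x : ℝ} (hx : x ∈ IA α) :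
    ∃ t ∈ Set.Icc (0:ℝ) (1/2), kA α t = x := by
  have : Set.uIcc (kA α 0) (kA α (1/2)) ⊆ kA α '' Set.uIcc 0 (1/2) :=
    intermediate_value_uIcc (continuous_kA hα).continuousOn
  rw [Set.uIcc_of_le (by norm_num : (0:ℝ) ≤ 1/2), kA_zero hα, kA_half hα] at this
  obtain ⟨t, ht, hxt⟩ := this hx
  exact ⟨t, ht, hxt⟩

lemma kAInv_mem (hα : 0 < α) (hα1 : α ≠ 1) {x : ℝ} (hx : x ∈ IA α) :
    kAInv α x ∈ Set.Icc (0:ℝ) (1/2) :=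
  Function.invFunOn_mem (IA_surj hα hα1 hx)

lemma kA_kAInv (hα : 0 < α) (hα1 : α ≠ 1) {x : ℝ} (hx : x ∈ IA α) :
    kA α (kAInv α x) = x :=
  Function.invFunOn_eq (IA_surj hα hα1 hx)

lemma kAInv_kA (hα : 0 < α) (hα1 : α ≠ 1) {t : ℝ} (ht : t ∈ Set.Icc (0:ℝ) (1/2)) :
    kAInv α (kA α t) = t :=
  (kA_injOn hα hα1).leftInvOn_invFunOn ht

lemma bconv_comm (a b : ℝ) : bconv a b = bconv b a := by unfold bconv; ring

lemma bconv_flip (a b : ℝ) : bconv (1 - a) b = 1 - bconv a b := by unfold bconv; ring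

lemma bconv_mem_half {a b : ℝ} (ha : a ∈ Set.Icc (0:ℝ) (1/2)) (hb : b ∈ Set.Icc (0:ℝ) (1/2)) :
    bconv a b ∈ Set.Icc (0:ℝ) (1/2) := by
  obtain ⟨ha1, ha2⟩ := ha; obtain ⟨hb1, hb2⟩ := hb
  constructor
  · unfold bconv; nlinarith
  · unfold bconv; nlinarith

lemma bconv_mem_one {a b : ℝ} (ha : a ∈ Set.Icc (0:ℝ) 1) (hb : b ∈ Set.Icc (0:ℝ) 1) :
    bconv a b ∈ Set.Icc (0:ℝ) 1 := by
  obtain ⟨ha1, ha2⟩ := ha; obtain ⟨hb1, hb2⟩ := hb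
  constructor
  · unfold bconv; nlinarith
  · unfold bconv; nlinarith

/-- the key glue: `kkA` applied to `kA` values computes `kA` of the binary convolution. -/
lemma kkA_kA (hα : 0 < α) (hα1 : α ≠ 1) {t1 t2 : ℝ}
    (h1 : t1 ∈ Set.Icc (0:ℝ) 1) (h2 : t2 ∈ Set.Icc (0:ℝ) 1) :
    kkA α (kA α t1) (kA α t2) = kA α (bconv t1 t2) := by
  -- reduce to representatives in [0,1/2]
  have key : ∀ s1 s2 : ℝ, s1 ∈ Set.Icc (0:ℝ) (1/2) → s2 ∈ Set.Icc (0:ℝ) (1/2) →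
      kkA α (kA α s1) (kA α s2) = kA α (bconv s1 s2) := by
    intro s1 s2 hs1 hs2
    unfold kkA
    rw [kAInv_kA hα hα1 hs1, kAInv_kA hα hα1 hs2]
  rcases le_or_gt t1 (1/2) with c1 | c1 <;> rcases le_or_gt t2 (1/2) with c2 | c2
  · exact key t1 t2 ⟨h1.1, c1⟩ ⟨h2.1, c2⟩
  · rw [show kA α t2 = kA α (1 - t2) by rw [← kA_symm t2],
      key t1 (1 - t2) ⟨h1.1, c1⟩ ⟨by linarith [h2.2], by linarith⟩,
      bconv_comm, bconv_flip, ← kA_symm, show 1 - (1 - bconv t2 t1) = bconv t2 t1 by ring,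
      bconv_comm]
  · rw [show kA α t1 = kA α (1 - t1) by rw [← kA_symm t1],
      key (1 - t1) t2 ⟨by linarith [h1.2], by linarith⟩ ⟨h2.1, c2⟩,
      bconv_flip, ← kA_symm, show 1 - (1 - bconv t1 t2) = bconv t1 t2 by ring]
  · rw [show kA α t1 = kA α (1 - t1) by rw [← kA_symm t1],
      show kA α t2 = kA α (1 - t2) by rw [← kA_symm t2],
      key (1 - t1) (1 - t2) ⟨by linarith [h1.2], by linarith⟩ ⟨by linarith [h2.2], by linarith⟩,
      bconv_flip, bconv_comm, bconv_flip, bconv_comm]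
    ring_nf

end Aux

section PmfAux

variable {α : ℝ} {Y : Type*} [Fintype Y]

lemma margY_nonneg {p : Bool → Y → ℝ} (hp : IsPmf p) (y : Y) : 0 ≤ margY p y :=
  Finset.sum_nonneg fun x _ => hp.1 x y

lemma sum_margY {p : Bool → Y → ℝ} (hp : IsPmf p) : ∑ y, margY p y = 1 := by
  unfold margY; rw [Finset.sum_comm]; exact hp.2

lemma margY_bool (p : Bool → Y → ℝ) (y : Y) : margY p y = p true y + p false y := by
  simp [margY, Fintype.sum_bool]

lemma tcond_mem {p : Bool → Y → ℝ} (hp : IsPmf p) (y : Y) :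
    p true y / margY p y ∈ Set.Icc (0:ℝ) 1 := by
  rcases eq_or_ne (margY p y) 0 with h | h
  · rw [h]; simp
  · have hm : 0 < margY p y := lt_of_le_of_ne (margY_nonneg hp y) (Ne.symm h)
    constructor
    · exact div_nonneg (hp.1 true y) hm.le
    · rw [div_le_one hm, margY_bool]
      have := hp.1 false y; linarith

lemma K_repr (hα : 0 < α) {p : Bool → Y → ℝ} (hp : IsPmf p) :
    ∑ y, margY p y * (∑ x, (p x y / margY p y) ^ α) ^ (1/α)
      = ∑ y, margY p y * kA α (p true y / margY p y) := by
  apply Finset.sum_congr rfl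
  intro y _
  rcases eq_or_ne (margY p y) 0 with h | h
  · rw [h]; ring
  · congr 1
    have hm : 0 < margY p y := lt_of_le_of_ne (margY_nonneg hp y) (Ne.symm h)
    unfold kA
    rw [Fintype.sum_bool]
    have hf : p false y / margY p y = 1 - p true y / margY p y := by
      rw [eq_sub_iff_add_eq, ← add_div, div_eq_one_iff_eq h, margY_bool]
      ring
    rw [hf]

lemma K_mem_IA (hα : 0 < α) (hα1 : α ≠ 1) {p : Bool → Y → ℝ} (hp : IsPmf p) :
    ∑ y, margY p y * kA α (p true y / margY p y) ∈ IA α := by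
  have := (convex_uIcc (1:ℝ) (deltaA α)).sum_mem
    (t := Finset.univ) (w := fun y => margY p y)
    (z := fun y => kA α (p true y / margY p y))
    (fun y _ => margY_nonneg hp y) (sum_margY hp)
    (fun y _ => kA_mem_IA' hα hα1 (tcond_mem hp y))
  simpa [IA, smul_eq_mul] using this

lemma binH_eq_kA (hα : 0 < α) (hα1 : α ≠ 1) {t : ℝ} (ht : t ∈ Set.Icc (0:ℝ) 1) :
    binH α t = (α / (1 - α)) * Real.log (kA α t) := by
  unfold binH kA
  have hpos : 0 < t ^ α + (1 - t) ^ α := kH_pos hα ht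
  have ha0 : α ≠ 0 := ne_of_gt hα
  have h1a : 1 - α ≠ 0 := fun hc => hα1 (by linarith)
  rw [Real.log_rpow hpos, ← mul_assoc,
    show α / (1 - α) * (1/α) = 1/(1-α) by field_simp]

lemma binH_injOn (hα : 0 < α) (hα1 : α ≠ 1) : Set.InjOn (binH α) (Set.Icc 0 (1/2)) := by
  intro s hs t ht h
  apply kH_injOn hα hα1 hs ht
  unfold binH at h
  have h1 : (1:ℝ) / (1 - α) ≠ 0 := by
    simp only [ne_eq, div_eq_zero_iff]
    push_neg
    constructor
    · norm_num
    · intro hc; apply hα1; linarith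
  have hlog : Real.log (kH α s) = Real.log (kH α t) := mul_left_cancel₀ h1 h
  have hs' := kH_pos hα (Icc_half_subset hs)
  have ht' := kH_pos hα (Icc_half_subset ht)
  rw [← Real.exp_log hs', ← Real.exp_log ht', hlog]

lemma binHInv_condA (hα : 0 < α) (hα1 : α ≠ 1) {p : Bool → Y → ℝ} (hp : IsPmf p) :
    binHInv α (condA α p) = kAInv α (∑ y, margY p y * kA α (p true y / margY p y)) := by
  set Ksum := ∑ y, margY p y * kA α (p true y / margY p y) with hK
  have hKIA : Ksum ∈ IA α := K_mem_IA hα hα1 hp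
  set a := kAInv α Ksum with ha
  have haI : a ∈ Set.Icc (0:ℝ) (1/2) := kAInv_mem hα hα1 hKIA
  have hkAa : kA α a = Ksum := kA_kAInv hα hα1 hKIA
  have hcond : condA α p = binH α a := by
    rw [binH_eq_kA hα hα1 (Icc_half_subset haI), hkAa]
    unfold condA
    rw [K_repr hα hp]
  rw [hcond]
  exact (binH_injOn hα hα1).leftInvOn_invFunOn haI

end PmfAux

section CombineAux

variable {α : ℝ} {Y1 Y2 : Type*} [Fintype Y1] [Fintype Y2]

lemma margY_combine (p1 : Bool → Y1 → ℝ) (p2 : Bool → Y2 → ℝ) (y : Y1 × Y2) :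
    margY (combine p1 p2) y = margY p1 y.1 * margY p2 y.2 := by
  simp only [margY, combine, Fintype.sum_bool, Bool.true_xor, Bool.false_xor,
    Bool.not_true, Bool.not_false]
  ring

lemma combine_isPmf {p1 : Bool → Y1 → ℝ} {p2 : Bool → Y2 → ℝ}
    (hp1 : IsPmf p1) (hp2 : IsPmf p2) : IsPmf (combine p1 p2) := by
  constructor
  · intro x y
    apply Finset.sum_nonneg
    intro z _
    exact mul_nonneg (hp1.1 z y.1) (hp2.1 _ y.2)
  · rw [Finset.sum_comm]
    have : ∀ y : Y1 × Y2, ∑ x, combine p1 p2 x y = margY p1 y.1 * margY p2 y.2 := by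
      intro y
      rw [← margY_combine]
      rfl
    rw [Finset.sum_congr rfl fun y _ => this y, Fintype.sum_prod_type]
    rw [← Finset.sum_mul_sum]
    rw [sum_margY hp1, sum_margY hp2, mul_one]

lemma combine_true_div {p1 : Bool → Y1 → ℝ} {p2 : Bool → Y2 → ℝ}
    (y1 : Y1) (y2 : Y2) (h1 : margY p1 y1 ≠ 0) (h2 : margY p2 y2 ≠ 0) :
    combine p1 p2 true (y1, y2) / (margY p1 y1 * margY p2 y2)
      = bconv (p1 true y1 / margY p1 y1) (p2 true y2 / margY p2 y2) := by
  have e1 : p1 false y1 = margY p1 y1 - p1 true y1 := by rw [margY_bool]; ring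
  have e2 : p2 false y2 = margY p2 y2 - p2 true y2 := by rw [margY_bool]; ring
  simp only [combine, Fintype.sum_bool, Bool.true_xor, Bool.false_xor,
    Bool.not_true, Bool.not_false]
  rw [e1, e2]
  unfold bconv
  field_simp

/-- Step A : rewriting the sum for the combined pair. -/
lemma Kcomb_repr (hα : 0 < α) (hα1 : α ≠ 1) {p1 : Bool → Y1 → ℝ} {p2 : Bool → Y2 → ℝ}
    (hp1 : IsPmf p1) (hp2 : IsPmf p2) :
    ∑ y, margY (combine p1 p2) y
        * kA α (combine p1 p2 true y / margY (combine p1 p2) y)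
      = ∑ y1, ∑ y2, (margY p1 y1 * margY p2 y2)
        * kkA α (kA α (p1 true y1 / margY p1 y1)) (kA α (p2 true y2 / margY p2 y2)) := by
  rw [Fintype.sum_prod_type]
  apply Finset.sum_congr rfl; intro y1 _
  apply Finset.sum_congr rfl; intro y2 _
  rw [margY_combine]
  rcases eq_or_ne (margY p1 y1) 0 with h1 | h1
  · rw [h1]; ring
  rcases eq_or_ne (margY p2 y2) 0 with h2 | h2
  · rw [h2]; ring
  rw [combine_true_div y1 y2 h1 h2,
    kkA_kA hα hα1 (tcond_mem hp1 y1) (tcond_mem hp2 y2)]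

/-- Jensen chain, convex case. -/
lemma jensen_conv (hα : 0 < α) (hα1 : α ≠ 1) {p1 : Bool → Y1 → ℝ} {p2 : Bool → Y2 → ℝ}
    (hp1 : IsPmf p1) (hp2 : IsPmf p2)
    (hcx : ∀ y ∈ IA α, ConvexOn ℝ (IA α) (fun x => kkA α x y))
    (hcy : ∀ x ∈ IA α, ConvexOn ℝ (IA α) (fun y => kkA α x y)) :
    kkA α (∑ y, margY p1 y * kA α (p1 true y / margY p1 y))
        (∑ y, margY p2 y * kA α (p2 true y / margY p2 y))
      ≤ ∑ y, margY (combine p1 p2) y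
        * kA α (combine p1 p2 true y / margY (combine p1 p2) y) := by
  set v1 : Y1 → ℝ := fun y => kA α (p1 true y / margY p1 y) with hv1
  set v2 : Y2 → ℝ := fun y => kA α (p2 true y / margY p2 y) with hv2
  set K1 := ∑ y, margY p1 y * v1 y with hK1
  set K2 := ∑ y, margY p2 y * v2 y with hK2
  have hv1m : ∀ y, v1 y ∈ IA α := fun y => kA_mem_IA' hα hα1 (tcond_mem hp1 y)
  have hv2m : ∀ y, v2 y ∈ IA α := fun y => kA_mem_IA' hα hα1 (tcond_mem hp2 y)
  have hK1m : K1 ∈ IA α := K_mem_IA hα hα1 hp1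
  have hK2m : K2 ∈ IA α := K_mem_IA hα hα1 hp2
  rw [Kcomb_repr hα hα1 hp1 hp2]
  have stepB : ∀ y1, kkA α (v1 y1) K2 ≤ ∑ y2, margY p2 y2 * kkA α (v1 y1) (v2 y2) := by
    intro y1
    have := (hcy (v1 y1) (hv1m y1)).map_sum_le (t := Finset.univ) (w := margY p2) (p := v2)
      (fun y _ => margY_nonneg hp2 y) (sum_margY hp2) (fun y _ => hv2m y)
    simpa [smul_eq_mul] using this
  have stepC : kkA α K1 K2 ≤ ∑ y1, margY p1 y1 * kkA α (v1 y1) K2 := by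
    have := (hcx K2 hK2m).map_sum_le (t := Finset.univ) (w := margY p1) (p := v1)
      (fun y _ => margY_nonneg hp1 y) (sum_margY hp1) (fun y _ => hv1m y)
    simpa [smul_eq_mul] using this
  calc kkA α K1 K2 ≤ ∑ y1, margY p1 y1 * kkA α (v1 y1) K2 := stepC
    _ ≤ ∑ y1, margY p1 y1 * ∑ y2, margY p2 y2 * kkA α (v1 y1) (v2 y2) := by
        apply Finset.sum_le_sum
        intro y1 _
        exact mul_le_mul_of_nonneg_left (stepB y1) (margY_nonneg hp1 y1)
    _ = ∑ y1, ∑ y2, (margY p1 y1 * margY p2 y2) * kkA α (v1 y1) (v2 y2) := by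
        apply Finset.sum_congr rfl; intro y1 _
        rw [Finset.mul_sum]
        apply Finset.sum_congr rfl; intro y2 _
        ring

/-- Jensen chain, concave case. -/
lemma jensen_conc (hα : 0 < α) (hα1 : α ≠ 1) {p1 : Bool → Y1 → ℝ} {p2 : Bool → Y2 → ℝ}
    (hp1 : IsPmf p1) (hp2 : IsPmf p2)
    (hcx : ∀ y ∈ IA α, ConcaveOn ℝ (IA α) (fun x => kkA α x y))
    (hcy : ∀ x ∈ IA α, ConcaveOn ℝ (IA α) (fun y => kkA α x y)) :
    ∑ y, margY (combine p1 p2) y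
        * kA α (combine p1 p2 true y / margY (combine p1 p2) y)
      ≤ kkA α (∑ y, margY p1 y * kA α (p1 true y / margY p1 y))
        (∑ y, margY p2 y * kA α (p2 true y / margY p2 y)) := by
  set v1 : Y1 → ℝ := fun y => kA α (p1 true y / margY p1 y) with hv1
  set v2 : Y2 → ℝ := fun y => kA α (p2 true y / margY p2 y) with hv2
  set K1 := ∑ y, margY p1 y * v1 y with hK1
  set K2 := ∑ y, margY p2 y * v2 y with hK2
  have hv1m : ∀ y, v1 y ∈ IA α := fun y => kA_mem_IA' hα hα1 (tcond_mem hp1 y)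
  have hv2m : ∀ y, v2 y ∈ IA α := fun y => kA_mem_IA' hα hα1 (tcond_mem hp2 y)
  have hK2m : K2 ∈ IA α := K_mem_IA hα hα1 hp2
  rw [Kcomb_repr hα hα1 hp1 hp2]
  have stepB : ∀ y1, ∑ y2, margY p2 y2 * kkA α (v1 y1) (v2 y2) ≤ kkA α (v1 y1) K2 := by
    intro y1
    have := (hcy (v1 y1) (hv1m y1)).le_map_sum (t := Finset.univ) (w := margY p2) (p := v2)
      (fun y _ => margY_nonneg hp2 y) (sum_margY hp2) (fun y _ => hv2m y)
    simpa [smul_eq_mul] using this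
  have stepC : ∑ y1, margY p1 y1 * kkA α (v1 y1) K2 ≤ kkA α K1 K2 := by
    have := (hcx K2 hK2m).le_map_sum (t := Finset.univ) (w := margY p1) (p := v1)
      (fun y _ => margY_nonneg hp1 y) (sum_margY hp1) (fun y _ => hv1m y)
    simpa [smul_eq_mul] using this
  calc ∑ y1, ∑ y2, (margY p1 y1 * margY p2 y2) * kkA α (v1 y1) (v2 y2)
      = ∑ y1, margY p1 y1 * ∑ y2, margY p2 y2 * kkA α (v1 y1) (v2 y2) := by
        apply Finset.sum_congr rfl; intro y1 _
        rw [Finset.mul_sum]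
        apply Finset.sum_congr rfl; intro y2 _
        ring
    _ ≤ ∑ y1, margY p1 y1 * kkA α (v1 y1) K2 := by
        apply Finset.sum_le_sum
        intro y1 _
        exact mul_le_mul_of_nonneg_left (stepB y1) (margY_nonneg hp1 y1)
    _ ≤ kkA α K1 K2 := stepC

end CombineAux

/-- BSC-bound for the Arimoto conditional Rényi entropy. -/
theorem stmt_1 (α : ℝ) (hα : 0 < α) (hα1 : α ≠ 1)
    {Y1 Y2 : Type*} [Fintype Y1] [Fintype Y2]
    (p1 : Bool → Y1 → ℝ) (p2 : Bool → Y2 → ℝ)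
    (hp1 : IsPmf p1) (hp2 : IsPmf p2) :
    (((∀ y ∈ IA α, ConvexOn ℝ (IA α) (fun x => kkA α x y)) ∧
      (∀ x ∈ IA α, ConvexOn ℝ (IA α) (fun y => kkA α x y))) →
      (1 < α → condA α (combine p1 p2) ≤
          binH α (bconv (binHInv α (condA α p1)) (binHInv α (condA α p2)))) ∧
      (α < 1 → binH α (bconv (binHInv α (condA α p1)) (binHInv α (condA α p2))) ≤
          condA α (combine p1 p2))) ∧
    (((∀ y ∈ IA α, ConcaveOn ℝ (IA α) (fun x => kkA α x y)) ∧
      (∀ x ∈ IA α, ConcaveOn ℝ (IA α) (fun y => kkA α x y))) →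
      (1 < α → binH α (bconv (binHInv α (condA α p1)) (binHInv α (condA α p2))) ≤
          condA α (combine p1 p2)) ∧
      (α < 1 → condA α (combine p1 p2) ≤
          binH α (bconv (binHInv α (condA α p1)) (binHInv α (condA α p2))))) := by
  have hpc : IsPmf (combine p1 p2) := combine_isPmf hp1 hp2
  set K1 := ∑ y, margY p1 y * kA α (p1 true y / margY p1 y) with hK1def
  set K2 := ∑ y, margY p2 y * kA α (p2 true y / margY p2 y) with hK2def
  set Kc := ∑ y, margY (combine p1 p2) y
      * kA α (combine p1 p2 true y / margY (combine p1 p2) y) with hKcdef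
  have hcond1 : binHInv α (condA α p1) = kAInv α K1 := binHInv_condA hα hα1 hp1
  have hcond2 : binHInv α (condA α p2) = kAInv α K2 := binHInv_condA hα hα1 hp2
  have hKc : condA α (combine p1 p2) = (α/(1-α)) * Real.log Kc := by
    unfold condA
    rw [K_repr hα hpc]
  have ha : kAInv α K1 ∈ Set.Icc (0:ℝ) (1/2) := kAInv_mem hα hα1 (K_mem_IA hα hα1 hp1)
  have hb : kAInv α K2 ∈ Set.Icc (0:ℝ) (1/2) := kAInv_mem hα hα1 (K_mem_IA hα hα1 hp2)
  have hc : bconv (kAInv α K1) (kAInv α K2) ∈ Set.Icc (0:ℝ) (1/2) := bconv_mem_half ha hb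
  have hRHS : binH α (bconv (binHInv α (condA α p1)) (binHInv α (condA α p2)))
      = (α/(1-α)) * Real.log (kkA α K1 K2) := by
    rw [hcond1, hcond2, binH_eq_kA hα hα1 (Icc_half_subset hc)]
    rfl
  have hkkpos : 0 < kkA α K1 K2 := kA_pos hα (Icc_half_subset hc)
  have hKcpos : 0 < Kc := IA_pos hα hα1 (K_mem_IA hα hα1 hpc)
  constructor
  · rintro ⟨hcx, hcy⟩
    have hJ : kkA α K1 K2 ≤ Kc := jensen_conv hα hα1 hp1 hp2 hcx hcy
    have hlog : Real.log (kkA α K1 K2) ≤ Real.log Kc := Real.log_le_log hkkpos hJ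
    constructor
    · intro hgt
      rw [hKc, hRHS]
      exact mul_le_mul_of_nonpos_left hlog
        (div_nonpos_of_nonneg_of_nonpos hα.le (by linarith))
    · intro hlt
      rw [hKc, hRHS]
      exact mul_le_mul_of_nonneg_left hlog (le_of_lt (div_pos hα (by linarith)))
  · rintro ⟨hcx, hcy⟩
    have hJ : Kc ≤ kkA α K1 K2 := jensen_conc hα hα1 hp1 hp2 hcx hcy
    have hlog : Real.log Kc ≤ Real.log (kkA α K1 K2) := Real.log_le_log hKcpos hJ
    constructor
    · intro hgt
      rw [hKc, hRHS]
      exact mul_le_mul_of_nonpos_left hlog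
        (div_nonpos_of_nonneg_of_nonpos hα.le (by linarith))
    · intro hlt
      rw [hKc, hRHS]
      exact mul_le_mul_of_nonneg_left hlog (le_of_lt (div_pos hα (by linarith)))
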